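/- Let φ be a real polynomial of degree d+1 with d ≥ 1, and let Ω be a nonempty open subset of {x ∈ ℝ : φ′(x) > 0}. Define ℓ(x) = min( min_z |x − z|, dist(x, ℝ∖Ω) ) for x ∈ Ω and ℓ(x) = 0 for x ∉ Ω, where z ranges over the complex zeros of φ′. Then for every nonnegative integer κ and every α ∈ [0,1], ℓ is admissible for φ, κ, α on Ω, with admissibility constants depending only on d, κ, α. -/

import Mathlib

open MeasureTheory Real Set
open scoped ENNReal NNReal Topology Classical

noncomputable section

/-- `ℓ : ℝ → [0,∞)` is admissible for the phase `φ` on `Ω` relative to `κ`, `α`, with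
constants `A ≥ 0`, `c > 0`, `B ≥ 0`: it is nonnegative, `1`-Lipschitz, vanishes off `Ω`,
and satisfies the pointwise bounds (1.4) and (1.5) of the paper. -/
def Admissible (Ω : Set ℝ) (φ : ℝ → ℝ) (κ : ℕ) (α A c B : ℝ) (ℓ : ℝ → ℝ) : Prop :=
  (∀ x, 0 ≤ ℓ x) ∧ LipschitzWith 1 ℓ ∧ (∀ x ∉ Ω, ℓ x = 0) ∧
  (∀ x ∈ Ω, ∀ j : ℕ, 1 ≤ j → j ≤ κ →
    |iteratedDeriv (j + 1) φ x| * ℓ x ^ j ≤ A * |deriv φ x|) ∧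
  (∀ x ∈ Ω, ∀ y ∈ Ω, |y - x| ≤ c * ℓ x →
    |iteratedDeriv (κ + 1) φ x - iteratedDeriv (κ + 1) φ y| * ℓ x ^ ((κ : ℝ) + α)
      ≤ B * |x - y| ^ α * |deriv φ x|)

namespace PolyAdmAux

open Polynomial

lemma iteratedDeriv_polyEval (p : Polynomial ℝ) (n : ℕ) :
    iteratedDeriv n (fun x => p.eval x) = fun x => (derivative^[n] p).eval x := by
  induction n with
  | zero => simp
  | succ n ih =>
      rw [iteratedDeriv_succ, ih, Function.iterate_succ_apply']
      funext x
      simp [Polynomial.deriv]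

lemma abs_multiset_sum (m : Multiset ℂ) :
    ‖m.sum‖ ≤ (m.map fun x => ‖x‖).sum :=
  norm_multiset_sum_le m

lemma iterate_derivative_multiset_sum (j : ℕ) (m : Multiset (Polynomial ℂ)) :
    derivative^[j] m.sum = (m.map (fun q => derivative^[j] q)).sum := by
  have h : ∀ q : Polynomial ℂ, derivative^[j] q = ((derivative : Polynomial ℂ →ₗ[ℂ] Polynomial ℂ) ^ j) q :=
    fun q => (Module.End.pow_apply derivative j q).symm
  simp only [h]
  exact map_multiset_sum _ m

lemma prod_comparison (s : Multiset ℂ) (x ξ : ℂ) (L : ℝ)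
    (hs : ∀ z ∈ s, L ≤ ‖x - z‖) (hξ : ‖x - ξ‖ ≤ L / 2) :
    ‖Polynomial.eval ξ (s.map (fun z => X - C z)).prod‖
      ≤ (3/2 : ℝ) ^ Multiset.card s *
        ‖Polynomial.eval x (s.map (fun z => X - C z)).prod‖ := by
  induction s using Multiset.induction_on with
  | empty => simp
  | cons a m ih =>
    have ha := hs a (Multiset.mem_cons_self a m)
    have hxi : (0:ℝ) ≤ ‖x - ξ‖ := norm_nonneg _
    have hax : ‖ξ - a‖ ≤ (3/2) * ‖x - a‖ := by
      have : ξ - a = (x - a) - (x - ξ) := by ring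
      rw [this]
      calc ‖(x - a) - (x - ξ)‖ ≤ ‖x - a‖ + ‖x - ξ‖ := by
            simpa using norm_sub_le (x-a) (x-ξ)
        _ ≤ ‖x - a‖ + L / 2 := by linarith
        _ ≤ (3/2) * ‖x - a‖ := by linarith
    have ihm := ih (fun z hz => hs z (Multiset.mem_cons_of_mem hz))
    simp only [Multiset.map_cons, Multiset.prod_cons, Polynomial.eval_mul, map_mul, norm_mul,
      Polynomial.eval_sub, Polynomial.eval_X, Polynomial.eval_C, Multiset.card_cons]
    calc ‖ξ - a‖ * ‖Polynomial.eval ξ (m.map (fun z => X - C z)).prod‖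
        ≤ ((3/2) * ‖x - a‖) *
          ((3/2 : ℝ) ^ Multiset.card m * ‖Polynomial.eval x (m.map (fun z => X - C z)).prod‖) := by
          apply mul_le_mul hax ihm (norm_nonneg _)
          positivity
      _ = (3/2 : ℝ) ^ (Multiset.card m + 1) *
          (‖x - a‖ * ‖Polynomial.eval x (m.map (fun z => X - C z)).prod‖) := by
          rw [pow_succ]; ring

lemma eval_multiset_sum' (m : Multiset (Polynomial ℂ)) (x : ℂ) :
    Polynomial.eval x m.sum = (m.map (Polynomial.eval x)).sum := by
  simpa using (Polynomial.evalRingHom x).map_multiset_sum m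

lemma key_deriv_bound (j : ℕ) :
    ∀ (s : Multiset ℂ) (x : ℂ) (L : ℝ), 0 ≤ L →
      (∀ z ∈ s, L ≤ ‖x - z‖) →
      ‖Polynomial.eval x
          (derivative^[j] (s.map (fun z => X - C z)).prod)‖ * L ^ j
        ≤ (Multiset.card s : ℝ) ^ j *
          ‖Polynomial.eval x (s.map (fun z => X - C z)).prod‖ := by
  induction j with
  | zero => intro s x L _ _; simp
  | succ j ih =>
    intro s x L hL hs
    classical
    set f : ℂ → Polynomial ℂ := fun z => X - C z with hfdef
    set Q : Polynomial ℂ := (s.map f).prod with hQ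
    set F : ℂ → Polynomial ℂ := fun i => derivative^[j] (((s.erase i).map f).prod) with hF
    have hder : derivative^[j+1] Q = (s.map F).sum := by
      rw [Function.iterate_succ_apply]
      have h1 : derivative Q = (s.map (fun i => ((s.erase i).map f).prod)).sum := by
        rw [hQ, Polynomial.derivative_prod]
        congr 1
        refine Multiset.map_congr rfl fun i _ => ?_
        simp [hfdef]
      rw [h1, iterate_derivative_multiset_sum, Multiset.map_map]
      rfl
    have heval : ‖Polynomial.eval x (derivative^[j+1] Q)‖
        ≤ (s.map (fun i => ‖Polynomial.eval x (F i)‖)).sum := by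
      rw [hder, eval_multiset_sum']
      refine le_trans (abs_multiset_sum _) (le_of_eq ?_)
      simp [Multiset.map_map, Function.comp]
    have hterm : ∀ i ∈ s, ‖Polynomial.eval x (F i)‖ * (L ^ j * L)
        ≤ (Multiset.card s : ℝ) ^ j * ‖Polynomial.eval x Q‖ := by
      intro i hi
      have hQsplit : Q = f i * ((s.erase i).map f).prod := by
        rw [hQ, ← Multiset.prod_cons, ← Multiset.map_cons, Multiset.cons_erase hi]
      have habsQ : ‖Polynomial.eval x Q‖
          = ‖x - i‖ * ‖Polynomial.eval x (((s.erase i).map f).prod)‖ := by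
        rw [hQsplit]; simp [hfdef]
      have hihe := ih (s.erase i) x L hL (fun z hz => hs z (Multiset.mem_of_mem_erase hz))
      have hcard : ((Multiset.card (s.erase i) : ℝ)) ^ j ≤ (Multiset.card s : ℝ) ^ j := by
        apply pow_le_pow_left₀ (by positivity)
        exact_mod_cast Multiset.card_le_card (Multiset.erase_le i s)
      have hLi : L ≤ ‖x - i‖ := hs i hi
      calc ‖Polynomial.eval x (F i)‖ * (L^j * L)
          = (‖Polynomial.eval x (F i)‖ * L^j) * L := by ring
        _ ≤ ((Multiset.card (s.erase i) : ℝ) ^ j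
              * ‖Polynomial.eval x (((s.erase i).map f).prod)‖) * L :=
            mul_le_mul_of_nonneg_right hihe hL
        _ ≤ ((Multiset.card s : ℝ) ^ j
              * ‖Polynomial.eval x (((s.erase i).map f).prod)‖) * ‖x - i‖ := by
            apply mul_le_mul (mul_le_mul_of_nonneg_right hcard (norm_nonneg _)) hLi hL
            positivity
        _ = (Multiset.card s : ℝ) ^ j * ‖Polynomial.eval x Q‖ := by rw [habsQ]; ring
    calc ‖Polynomial.eval x (derivative^[j+1] Q)‖ * L ^ (j+1)
        ≤ ((s.map (fun i => ‖Polynomial.eval x (F i)‖)).sum) * L ^ (j+1) :=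
          mul_le_mul_of_nonneg_right heval (by positivity)
      _ = (s.map (fun i => ‖Polynomial.eval x (F i)‖ * (L^j * L))).sum := by
          rw [← Multiset.sum_map_mul_right, pow_succ]
      _ ≤ (s.map (fun _ => (Multiset.card s : ℝ) ^ j * ‖Polynomial.eval x Q‖)).sum :=
          Multiset.sum_map_le_sum_map _ _ hterm
      _ = (Multiset.card s : ℝ) * ((Multiset.card s : ℝ)^j * ‖Polynomial.eval x Q‖) := by
          simp [Multiset.map_const', Multiset.sum_replicate, nsmul_eq_mul]
      _ = (Multiset.card s : ℝ)^(j+1) * ‖Polynomial.eval x Q‖ := by ring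

end PolyAdmAux

/-- **Proposition 2.6.** Let `φ` be a real polynomial of degree `d + 1` (`d ≥ 1`) and let
`Ω` be a nonempty open subset of `{φ′ > 0}`.  The function equal, on `Ω`, to the minimum of
the distance to the complex zeros of `φ′` and the distance to `ℝ ∖ Ω` (and to `0` off `Ω`)
is admissible for `φ, κ, α` on `Ω` for every `κ` and `α ∈ [0,1]`, with constants depending
only on `d, κ, α`. -/
theorem polynomial_distance_admissible
    (d : ℕ) (hd : 1 ≤ d) (κ : ℕ) (α : ℝ) (hα0 : 0 ≤ α) (hα1 : α ≤ 1) :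
    ∃ A c B : ℝ, 0 ≤ A ∧ 0 < c ∧ 0 ≤ B ∧
      ∀ (φ : Polynomial ℝ) (Ω : Set ℝ),
        φ.natDegree = d + 1 → IsOpen Ω → Ω.Nonempty →
        Ω ⊆ {x : ℝ | 0 < φ.derivative.eval x} →
        Admissible Ω (fun x => φ.eval x) κ α A c B fun x =>
          if x ∈ Ω then
            sInf (((fun z : ℂ => ‖(x : ℂ) - z‖) ''
                {z : ℂ | Polynomial.aeval z φ.derivative = 0}) ∪
              ((fun y : ℝ => |x - y|) '' Ωᶜ))
          else 0 := by
  classical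
  refine ⟨(d:ℝ)^κ, 1/2, (d:ℝ)^(κ+1) * (3/2:ℝ)^d * 2^(κ+1), by positivity, by norm_num,
    by positivity, ?_⟩
  intro φ Ω hdeg hΩopen hΩne hΩsub
  set p : Polynomial ℝ := φ.derivative with hp
  have hpdeg : p.natDegree = d := by
    have h0 : 0 < φ.natDegree := by omega
    have h1 := Polynomial.degree_derivative_eq φ h0
    have h2 : p.natDegree = φ.natDegree - 1 := Polynomial.natDegree_eq_of_degree_eq_some h1
    omega
  have hp0 : p ≠ 0 := by
    intro h
    rw [h, Polynomial.natDegree_zero] at hpdeg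
    omega
  set P : Polynomial ℂ := p.map (algebraMap ℝ ℂ) with hPdef
  have hP0 : P ≠ 0 := Polynomial.map_ne_zero hp0
  have hPnd : P.natDegree = d := by rw [hPdef, Polynomial.natDegree_map, hpdeg]
  set R : Multiset ℂ := P.roots with hRdef
  have hsplits : P.Splits := IsAlgClosed.splits P
  have hcard : Multiset.card R = d := by
    have h := hsplits.natDegree_eq_card_roots
    rw [hRdef, ← h, hPnd]
  have hfac : P = Polynomial.C P.leadingCoeff * (R.map fun a => Polynomial.X - Polynomial.C a).prod :=
    hsplits.eq_prod_roots
  set Q : Polynomial ℂ := (R.map fun a => Polynomial.X - Polynomial.C a).prod with hQdef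
  set Zset : Set ℂ := {z : ℂ | Polynomial.aeval z p = 0} with hZdef
  have hZmem : ∀ z : ℂ, z ∈ Zset ↔ Polynomial.eval z P = 0 := by
    intro z
    simp [hZdef, Polynomial.aeval_def, hPdef, Polynomial.eval_map]
  have hroots_mem : ∀ z : ℂ, z ∈ R ↔ z ∈ Zset := by
    intro z
    rw [hZmem, hRdef, Polynomial.mem_roots hP0]
    rfl
  set T : Set ℂ := Zset ∪ (Complex.ofReal '' Ωᶜ) with hTdef
  have hTne : T.Nonempty := by
    have hPdeg' : P.degree ≠ 0 := by
      rw [Polynomial.degree_eq_natDegree hP0, hPnd]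
      exact_mod_cast by omega
    obtain ⟨z, hz⟩ := IsAlgClosed.exists_root P hPdeg'
    exact ⟨z, Or.inl ((hZmem z).2 hz)⟩
  have hTclosed : IsClosed T := by
    apply IsClosed.union
    · have h : Zset = (fun z => Polynomial.eval z P) ⁻¹' {0} := by
        ext z; simpa using hZmem z
      rw [h]
      exact isClosed_singleton.preimage (Polynomial.continuous P)
    · exact (Complex.isometry_ofReal.isClosedEmbedding.isClosedMap) _ hΩopen.isClosed_compl
  -- the distance function
  have hinf : ∀ x : ℝ, sInf (((fun z : ℂ => ‖(x : ℂ) - z‖) '' Zset) ∪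
      ((fun y : ℝ => |x - y|) '' Ωᶜ)) = Metric.infDist (x : ℂ) T := by
    intro x
    have himg : ((fun z : ℂ => ‖(x : ℂ) - z‖) '' Zset) ∪
        ((fun y : ℝ => |x - y|) '' Ωᶜ) = (fun z : ℂ => dist (x:ℂ) z) '' T := by
      have h1 : (fun z : ℂ => ‖(x:ℂ) - z‖) '' Zset
          = (fun z : ℂ => dist (x:ℂ) z) '' Zset :=
        Set.image_congr fun z _ => (Complex.dist_eq _ _).symm
      have h2 : (fun z : ℂ => dist (x:ℂ) z) '' (Complex.ofReal '' Ωᶜ)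
          = (fun y : ℝ => |x - y|) '' Ωᶜ := by
        rw [Set.image_image]
        exact Set.image_congr fun y _ => by
          rw [Complex.dist_eq, ← Complex.ofReal_sub, Complex.norm_real, Real.norm_eq_abs]
      rw [hTdef, Set.image_union, h1, h2]
    rw [himg, Set.image_eq_range, Metric.infDist_eq_iInf]
    rfl
  have hzero : ∀ x : ℝ, x ∉ Ω → Metric.infDist (x:ℂ) T = 0 := by
    intro x hx
    have hxT : (x:ℂ) ∈ T := Or.inr ⟨x, hx, rfl⟩
    have h1 : Metric.infDist (x:ℂ) T ≤ 0 := by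
      simpa using Metric.infDist_le_dist_of_mem (x := (x:ℂ)) hxT
    exact le_antisymm h1 Metric.infDist_nonneg
  have hℓeq : (fun x : ℝ =>
      if x ∈ Ω then
        sInf (((fun z : ℂ => ‖(x : ℂ) - z‖) ''
            {z : ℂ | Polynomial.aeval z φ.derivative = 0}) ∪
          ((fun y : ℝ => |x - y|) '' Ωᶜ))
      else 0) = fun x : ℝ => Metric.infDist (x:ℂ) T := by
    funext x
    by_cases hx : x ∈ Ω
    · simpa [hx] using hinf x
    · simp only [hx, if_false]
      exact (hzero x hx).symm
  rw [hℓeq]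
  -- generic evaluation bridge ℝ → ℂ
  have hev : ∀ (q : Polynomial ℝ) (t : ℝ),
      Polynomial.eval (t:ℂ) (q.map (algebraMap ℝ ℂ)) = ((q.eval t : ℝ) : ℂ) := by
    intro q t
    rw [Polynomial.eval_map]
    exact Polynomial.eval₂_at_apply (algebraMap ℝ ℂ) t
  have hDj : ∀ (j : ℕ) (t : ℝ), |Polynomial.eval t (Polynomial.derivative^[j] p)|
      = ‖P.leadingCoeff‖
        * ‖Polynomial.eval (t:ℂ) (Polynomial.derivative^[j] Q)‖ := by
    intro j t
    have h1 : Polynomial.derivative^[j] P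
        = (Polynomial.derivative^[j] p).map (algebraMap ℝ ℂ) := by
      rw [hPdef, Polynomial.iterate_derivative_map]
    have h2 : Polynomial.derivative^[j] P
        = Polynomial.C P.leadingCoeff * Polynomial.derivative^[j] Q := by
      conv_lhs => rw [hfac]
      rw [Polynomial.iterate_derivative_C_mul]
    have h3 : ‖Polynomial.eval (t:ℂ) (Polynomial.derivative^[j] P)‖
        = |Polynomial.eval t (Polynomial.derivative^[j] p)| := by
      rw [h1, hev, Complex.norm_real, Real.norm_eq_abs]
    rw [← h3, h2]
    simp [map_mul]
  have habs0 : ∀ t : ℝ, |p.eval t|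
      = ‖P.leadingCoeff‖ * ‖Polynomial.eval (t:ℂ) Q‖ := by
    intro t
    simpa using hDj 0 t
  have hroot_dist : ∀ x : ℝ, ∀ z ∈ R, Metric.infDist (x:ℂ) T ≤ ‖(x:ℂ) - z‖ := by
    intro x z hz
    rw [← Complex.dist_eq]
    exact Metric.infDist_le_dist_of_mem (Or.inl ((hroots_mem z).1 hz))
  have hℓpos : ∀ x ∈ Ω, 0 < Metric.infDist (x:ℂ) T := by
    intro x hx
    have hpx : 0 < p.eval x := hΩsub hx
    have hxnT : (x:ℂ) ∉ T := by
      rintro (h | ⟨y, hy, hyx⟩)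
      · rw [hZmem, hPdef, hev] at h
        exact absurd (Complex.ofReal_eq_zero.mp h) (ne_of_gt hpx)
      · exact hy (by rwa [show y = x from Complex.ofReal_inj.mp hyx] at hy ⊢)
    exact (hTclosed.notMem_iff_infDist_pos hTne).1 hxnT
  refine ⟨fun x => Metric.infDist_nonneg, ?_, fun x hx => hzero x hx, ?_, ?_⟩
  · -- Lipschitz
    have h := (Metric.lipschitz_infDist_pt T).comp Complex.isometry_ofReal.lipschitz
    simpa [Function.comp_def] using h
  · -- condition (1.4)
    intro x hx j hj1 hjκ
    simp only [PolyAdmAux.iteratedDeriv_polyEval]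
    rw [Polynomial.deriv]
    set L : ℝ := Metric.infDist (x:ℂ) T with hLdef
    have hL0 : 0 ≤ L := Metric.infDist_nonneg
    have hkey := PolyAdmAux.key_deriv_bound j R (x:ℂ) L hL0 (hroot_dist x)
    rw [hcard, ← hQdef] at hkey
    have hstep : Polynomial.derivative^[j+1] φ = Polynomial.derivative^[j] p := by
      rw [Function.iterate_succ_apply, hp]
    rw [hstep, hDj j x]
    calc ‖P.leadingCoeff‖
          * ‖Polynomial.eval (x:ℂ) (Polynomial.derivative^[j] Q)‖ * L ^ j
        = ‖P.leadingCoeff‖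
          * (‖Polynomial.eval (x:ℂ) (Polynomial.derivative^[j] Q)‖ * L ^ j) := by
          ring
      _ ≤ ‖P.leadingCoeff‖
          * ((d:ℝ) ^ j * ‖Polynomial.eval (x:ℂ) Q‖) :=
          mul_le_mul_of_nonneg_left hkey (norm_nonneg _)
      _ = (d:ℝ) ^ j * |p.eval x| := by rw [habs0 x]; ring
      _ ≤ (d:ℝ) ^ κ * |p.eval x| := by
          apply mul_le_mul_of_nonneg_right _ (abs_nonneg _)
          exact pow_le_pow_right₀ (by exact_mod_cast hd) hjκ
  · -- condition (1.5)
    intro x hx y hy hxy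
    simp only [PolyAdmAux.iteratedDeriv_polyEval]
    rw [Polynomial.deriv]
    set L : ℝ := Metric.infDist (x:ℂ) T with hLdef
    have hLpos : 0 < L := hℓpos x hx
    rcases eq_or_ne x y with rfl | hne
    · simp only [sub_self, abs_zero, zero_mul]
      positivity
    · have hxyL : |x - y| ≤ L / 2 := by
        rw [abs_sub_comm]; linarith
      have hxypos : 0 < |x - y| := abs_pos.mpr (sub_ne_zero.mpr hne)
      set N : ℝ := (d:ℝ)^(κ+1) * (3/2:ℝ)^d * |p.eval x| with hNdef
      have hN0 : 0 ≤ N := by positivity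
      have hD : Polynomial.derivative (Polynomial.derivative^[κ+1] φ)
          = Polynomial.derivative^[κ+1] p := by
        rw [hp]
        exact ((Function.iterate_succ_apply' (⇑(Polynomial.derivative (R := ℝ)))
          (κ+1) φ).symm).trans (Function.iterate_succ_apply _ (κ+1) φ)
      have hDne : ((L/2)^(κ+1) : ℝ) ≠ 0 := by positivity
      have hMb : ∀ t ∈ Metric.closedBall x (L/2),
          ‖deriv (fun t : ℝ => Polynomial.eval t (Polynomial.derivative^[κ+1] φ)) t‖
            ≤ N / (L/2)^(κ+1) := by
        intro t ht
        have hdist : |x - t| ≤ L / 2 := by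
          rw [abs_sub_comm]
          simpa [Real.dist_eq] using ht
        have hgt : deriv (fun t : ℝ => Polynomial.eval t (Polynomial.derivative^[κ+1] φ)) t
            = Polynomial.eval t (Polynomial.derivative^[κ+1] p) := by
          rw [Polynomial.deriv, hD]
        have hroots_t : ∀ z ∈ R, L/2 ≤ ‖(t:ℂ) - z‖ := by
          intro z hz
          have h1 := hroot_dist x z hz
          have h2 : ‖(x:ℂ) - (t:ℂ)‖ ≤ L/2 := by
            rw [← Complex.ofReal_sub, Complex.norm_real, Real.norm_eq_abs]; exact hdist
          have h3 : ‖(x:ℂ) - z‖ - ‖(x:ℂ) - (t:ℂ)‖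
              ≤ ‖(t:ℂ) - z‖ := by
            have hrw : (t:ℂ) - z = ((x:ℂ) - z) - ((x:ℂ) - (t:ℂ)) := by ring
            rw [hrw]
            simpa using
              norm_sub_norm_le ((x:ℂ) - z) ((x:ℂ) - (t:ℂ))
          linarith
        have hkey := PolyAdmAux.key_deriv_bound (κ+1) R (t:ℂ) (L/2) (by positivity) hroots_t
        rw [hcard] at hkey
        have hcomp := PolyAdmAux.prod_comparison R (x:ℂ) (t:ℂ) L (hroot_dist x)
          (by rw [← Complex.ofReal_sub, Complex.norm_real, Real.norm_eq_abs]; exact hdist)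
        rw [hcard] at hcomp
        have hchain : |Polynomial.eval t (Polynomial.derivative^[κ+1] p)| * (L/2)^(κ+1)
            ≤ N := by
          rw [hDj (κ+1) t]
          calc ‖P.leadingCoeff‖
                * ‖Polynomial.eval (t:ℂ) (Polynomial.derivative^[κ+1] Q)‖
                * (L/2)^(κ+1)
              = ‖P.leadingCoeff‖
                * (‖Polynomial.eval (t:ℂ) (Polynomial.derivative^[κ+1] Q)‖
                  * (L/2)^(κ+1)) := by ring
            _ ≤ ‖P.leadingCoeff‖
                * ((d:ℝ)^(κ+1) * ‖Polynomial.eval (t:ℂ) Q‖) :=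
                mul_le_mul_of_nonneg_left hkey (norm_nonneg _)
            _ ≤ ‖P.leadingCoeff‖
                * ((d:ℝ)^(κ+1) * ((3/2:ℝ)^d * ‖Polynomial.eval (x:ℂ) Q‖)) := by
                apply mul_le_mul_of_nonneg_left _ (norm_nonneg _)
                exact mul_le_mul_of_nonneg_left hcomp (by positivity)
            _ = (d:ℝ)^(κ+1) * (3/2:ℝ)^d
                * (‖P.leadingCoeff‖ * ‖Polynomial.eval (x:ℂ) Q‖) := by
                ring
            _ = N := by rw [hNdef, habs0 x]
        rw [hgt, Real.norm_eq_abs, le_div_iff₀ (by positivity)]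
        exact hchain
      have hdiff : ∀ t ∈ Metric.closedBall x (L/2),
          DifferentiableAt ℝ (fun t : ℝ => Polynomial.eval t (Polynomial.derivative^[κ+1] φ)) t :=
        fun t _ => Polynomial.differentiableAt _
      have hyball : y ∈ Metric.closedBall x (L/2) := by
        rw [Metric.mem_closedBall, Real.dist_eq]
        linarith
      have hxball : x ∈ Metric.closedBall x (L/2) := Metric.mem_closedBall_self (by positivity)
      have hMVT := (convex_closedBall x (L/2)).norm_image_sub_le_of_norm_deriv_le
        hdiff hMb hxball hyball
      have hMVT' : |Polynomial.eval x (Polynomial.derivative^[κ+1] φ)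
            - Polynomial.eval y (Polynomial.derivative^[κ+1] φ)|
          ≤ N / (L/2)^(κ+1) * |x - y| := by
        rw [abs_sub_comm, abs_sub_comm x y]
        simpa [Real.norm_eq_abs] using hMVT
      have habs_le_L : |x - y| ≤ L := by linarith
      have h1 : |x - y| = |x - y| ^ α * |x - y| ^ (1 - α) := by
        rw [← Real.rpow_add hxypos]
        have hh : α + (1 - α) = 1 := by ring
        rw [hh, Real.rpow_one]
      have h2 : |x - y| ^ (1 - α) ≤ L ^ (1 - α) :=
        Real.rpow_le_rpow (abs_nonneg _) habs_le_L (by linarith)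
      have h3 : L ^ ((κ:ℝ) + α) * L ^ (1 - α) = L ^ (κ + 1 : ℕ) := by
        rw [← Real.rpow_add hLpos, ← Real.rpow_natCast L (κ+1)]
        congr 1
        push_cast
        ring
      have hcore : |x - y| * L ^ ((κ:ℝ) + α) ≤ |x - y| ^ α * L ^ (κ + 1 : ℕ) := by
        have hα' : (0:ℝ) ≤ |x - y| ^ α := Real.rpow_nonneg (abs_nonneg _) _
        have hL' : (0:ℝ) ≤ L ^ ((κ:ℝ) + α) := Real.rpow_nonneg hLpos.le _
        calc |x - y| * L ^ ((κ:ℝ) + α)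
            = (|x - y| ^ α * |x - y| ^ (1 - α)) * L ^ ((κ:ℝ) + α) := by rw [← h1]
          _ ≤ (|x - y| ^ α * L ^ (1 - α)) * L ^ ((κ:ℝ) + α) :=
              mul_le_mul_of_nonneg_right (mul_le_mul_of_nonneg_left h2 hα') hL'
          _ = |x - y| ^ α * (L ^ ((κ:ℝ) + α) * L ^ (1 - α)) := by ring
          _ = |x - y| ^ α * L ^ (κ + 1 : ℕ) := by rw [h3]
      have hL2 : ((L/2)^(κ+1) : ℝ) * 2^(κ+1) = L^(κ+1) := by
        rw [div_pow]
        field_simp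
      calc |Polynomial.eval x (Polynomial.derivative^[κ+1] φ)
            - Polynomial.eval y (Polynomial.derivative^[κ+1] φ)| * L ^ ((κ:ℝ) + α)
          ≤ (N / (L/2)^(κ+1) * |x - y|) * L ^ ((κ:ℝ) + α) :=
            mul_le_mul_of_nonneg_right hMVT' (Real.rpow_nonneg hLpos.le _)
        _ = (N / (L/2)^(κ+1)) * (|x - y| * L ^ ((κ:ℝ) + α)) := by ring
        _ ≤ (N / (L/2)^(κ+1)) * (|x - y| ^ α * L ^ (κ + 1 : ℕ)) :=
            mul_le_mul_of_nonneg_left hcore (by positivity)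
        _ = (d:ℝ)^(κ+1) * (3/2:ℝ)^d * 2^(κ+1) * |x - y| ^ α * |Polynomial.eval x p| := by
            rw [hNdef, ← hL2]
            field_simp

end
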